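/- Let D be an integral domain, s ∈ D^n, g, h ∈ D[x] with h an annihilator of s and deg(g) + deg(h) ≤ n. Write, for any nonzero polynomial f ∈ D[x], f_2 for the polynomial part of the Laurent product f·(s_1 x^{-1} + ⋯ + s_n x^{-n}), i.e. f_2 = Σ_{j≥0} (f·s̲)_j x^j. Then (g·h)_2 = g·h_2. -/

import Mathlib

open Polynomial

/-- `f` annihilates the finite sequence `s 1, …, s n`:
`f = 0` or `f_0 s_{j-d} + ⋯ + f_d s_j = 0` for all `d+1 ≤ j ≤ n`, where `d = deg f`. -/
def Annihilates {D : Type*} [CommRing D] (n : ℕ) (s : ℕ → D) (f : Polynomial D) : Prop :=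
  f = 0 ∨ ∀ j : ℕ, f.natDegree + 1 ≤ j → j ≤ n →
    ∑ k ∈ Finset.range (f.natDegree + 1), f.coeff k * s (j - f.natDegree + k) = 0

/-- Linear complexity: minimal degree of a nonzero annihilator of `s 1, …, s n`. -/
noncomputable def LC {D : Type*} [CommRing D] (n : ℕ) (s : ℕ → D) : ℕ :=
  sInf {d | ∃ f : Polynomial D, f ≠ 0 ∧ Annihilates n s f ∧ f.natDegree = d}

/-- A minimal polynomial: a nonzero annihilator of minimal degree. -/
def IsMinPoly {D : Type*} [CommRing D] (n : ℕ) (s : ℕ → D) (μ : Polynomial D) : Prop :=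
  μ ≠ 0 ∧ Annihilates n s μ ∧ μ.natDegree = LC n s

/-- Discrepancy `Δ(f, s) = Σ_{k=0}^{d} f_k s_{n-d+k}` where `d = deg f`. -/
def Disc {D : Type*} [CommRing D] (n : ℕ) (s : ℕ → D) (f : Polynomial D) : D :=
  ∑ k ∈ Finset.range (f.natDegree + 1), f.coeff k * s (n - f.natDegree + k)

/-- The polynomial part `f_2` of the Laurent product `f · (s_1 x^{-1} + ⋯ + s_n x^{-n})`. -/
noncomputable def polyPart {D : Type*} [CommRing D] (n : ℕ) (s : ℕ → D) (f : Polynomial D) :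
    Polynomial D :=
  ∑ j ∈ Finset.range f.natDegree,
    Polynomial.C (∑ m ∈ Finset.Icc 1 n, f.coeff (j + m) * s m) * Polynomial.X ^ j

/-- The coefficient of `x^j` (for `j : ℤ`) in the Laurent product
`f · (s_1 x^{-1} + ⋯ + s_n x^{-n})`. -/
def laurentCoeff {D : Type*} [CommRing D] (n : ℕ) (s : ℕ → D) (f : Polynomial D) (j : ℤ) : D :=
  ∑ m ∈ Finset.Icc 1 n, if 0 ≤ j + (m : ℤ) then f.coeff (j + (m : ℤ)).toNat * s m else 0

noncomputable def icoeff {D : Type*} [CommRing D] (f : Polynomial D) (k : ℤ) : D :=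
  if 0 ≤ k then f.coeff k.toNat else 0

lemma laurentCoeff_eq {D : Type*} [CommRing D] (n : ℕ) (s : ℕ → D) (f : Polynomial D) (j : ℤ) :
    laurentCoeff n s f j = ∑ m ∈ Finset.Icc 1 n, icoeff f (j + m) * s m := by
  unfold laurentCoeff icoeff
  refine Finset.sum_congr rfl fun m _ => ?_
  split <;> simp

lemma icoeff_mul {D : Type*} [CommRing D] (g h : Polynomial D) (N : ℤ) :
    icoeff (g * h) N = ∑ i ∈ Finset.range (g.natDegree + 1), g.coeff i * icoeff h (N - i) := by
  rcases le_or_gt 0 N with hN | hN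
  · obtain ⟨M, rfl⟩ := Int.eq_ofNat_of_zero_le hN
    have key : ∀ i : ℕ, icoeff h ((M : ℤ) - i) = if i ≤ M then h.coeff (M - i) else 0 := by
      intro i
      unfold icoeff
      rcases le_or_gt i M with hi | hi
      · rw [if_pos (by omega), if_pos (by omega)]
        congr 1
        omega
      · rw [if_neg (by omega), if_neg (by omega)]
    simp only [key]
    unfold icoeff
    rw [if_pos hN, Int.toNat_natCast, Polynomial.coeff_mul,
      Finset.Nat.sum_antidiagonal_eq_sum_range_succ_mk]
    set K := max (g.natDegree + 1) (M + 1) with hK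
    have h1 : (∑ i ∈ Finset.range (M + 1), g.coeff i * h.coeff (M - i))
        = ∑ i ∈ Finset.range K, g.coeff i * (if i ≤ M then h.coeff (M - i) else 0) := by
      rw [show (∑ i ∈ Finset.range (M + 1), g.coeff i * h.coeff (M - i))
          = ∑ i ∈ Finset.range (M+1), g.coeff i * (if i ≤ M then h.coeff (M - i) else 0) from
        Finset.sum_congr rfl fun i hi => by rw [if_pos (by simp at hi; omega)]]
      exact Finset.sum_subset (Finset.range_subset_range.2 (le_max_right (g.natDegree+1) (M+1)))
        (fun i _ hi => by rw [if_neg (by simp at hi; omega), mul_zero])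
    have h2 : (∑ i ∈ Finset.range (g.natDegree + 1),
          g.coeff i * (if i ≤ M then h.coeff (M - i) else 0))
        = ∑ i ∈ Finset.range K, g.coeff i * (if i ≤ M then h.coeff (M - i) else 0) :=
      Finset.sum_subset (Finset.range_subset_range.2 (le_max_left _ _))
        (fun i _ hi => by
          rw [Polynomial.coeff_eq_zero_of_natDegree_lt (by simp at hi; omega), zero_mul])
    rw [h1, h2]
  · unfold icoeff
    rw [if_neg (by omega)]
    refine (Finset.sum_congr rfl fun i hi => ?_).trans Finset.sum_const_zero |>.symm
    rw [if_neg (by simp at hi; omega), mul_zero]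

lemma laurentCoeff_mul {D : Type*} [CommRing D] (n : ℕ) (s : ℕ → D) (g h : Polynomial D) (j : ℤ) :
    laurentCoeff n s (g * h) j
      = ∑ i ∈ Finset.range (g.natDegree + 1), g.coeff i * laurentCoeff n s h (j - i) := by
  simp only [laurentCoeff_eq, icoeff_mul, Finset.sum_mul, Finset.mul_sum]
  rw [Finset.sum_comm]
  refine Finset.sum_congr rfl fun i _ => Finset.sum_congr rfl fun m _ => ?_
  rw [mul_assoc]
  congr 2
  ring_nf


lemma polyPart_coeff {D : Type*} [CommRing D] (n : ℕ) (s : ℕ → D) (f : Polynomial D) (j : ℕ) :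
    (polyPart n s f).coeff j = laurentCoeff n s f (j : ℤ) := by
  have hRHS : laurentCoeff n s f (j : ℤ) = ∑ m ∈ Finset.Icc 1 n, f.coeff (j + m) * s m := by
    unfold laurentCoeff
    refine Finset.sum_congr rfl fun m hm => ?_
    rw [if_pos (by positivity)]
    norm_cast
  unfold polyPart
  rw [Polynomial.finset_sum_coeff, hRHS]
  simp only [Polynomial.coeff_C_mul, Polynomial.coeff_X_pow, mul_ite, mul_one, mul_zero]
  rcases lt_or_ge j f.natDegree with hj | hj
  · rw [Finset.sum_ite_eq (Finset.range f.natDegree) j, if_pos (Finset.mem_range.2 hj)]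
  · rw [Finset.sum_ite_eq (Finset.range f.natDegree) j,
      if_neg (by simp; omega)]
    refine (Finset.sum_congr rfl fun m hm => ?_).trans Finset.sum_const_zero |>.symm
    rw [Polynomial.coeff_eq_zero_of_natDegree_lt (by simp at hm; omega), zero_mul]

lemma laurentCoeff_neg_eq_zero {D : Type*} [CommRing D] (n : ℕ) (s : ℕ → D) (h : Polynomial D)
    (hh : Annihilates n s h) (t : ℕ) (ht1 : 1 ≤ t) (ht2 : t + h.natDegree ≤ n) :
    laurentCoeff n s h (-(t : ℤ)) = 0 := by
  rcases hh with rfl | hh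
  · unfold laurentCoeff
    refine (Finset.sum_congr rfl fun m hm => ?_).trans Finset.sum_const_zero
    split <;> simp
  · have key : laurentCoeff n s h (-(t : ℤ))
        = ∑ m ∈ Finset.Icc t (t + h.natDegree), h.coeff (m - t) * s m := by
      unfold laurentCoeff
      rw [show (∑ m ∈ Finset.Icc 1 n,
            if 0 ≤ -(t:ℤ) + (m : ℤ) then h.coeff (-(t:ℤ) + (m : ℤ)).toNat * s m else 0)
          = ∑ m ∈ Finset.Icc 1 n,
            (if t ≤ m then h.coeff (m - t) * s m else 0) from
        Finset.sum_congr rfl fun m hm => by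
          rcases le_or_gt t m with hm' | hm'
          · rw [if_pos (by omega), if_pos hm']
            congr 2
            omega
          · rw [if_neg (by omega), if_neg (by omega)]]
      refine (Finset.sum_subset
          (by intro m hm; simp at hm ⊢; omega)
          (fun m hm hm' => by
            simp only [Finset.mem_Icc] at hm hm'
            rcases le_or_gt t m with h' | h'
            · rw [if_pos h', Polynomial.coeff_eq_zero_of_natDegree_lt (by omega), zero_mul]
            · rw [if_neg (by omega)])).symm.trans
          (Finset.sum_congr rfl fun m hm => by
            rw [if_pos (by simp at hm; omega)])
    rw [key]
    have := hh (t + h.natDegree) (by omega) ht2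
    rw [← this, ← Finset.Ico_add_one_right_eq_Icc, Finset.sum_Ico_eq_sum_range]
    refine Finset.sum_congr (by congr 1; omega) fun k hk => ?_
    simp only [Finset.mem_range] at hk
    congr 2 <;> omega

theorem stmt_9 {D : Type*} [CommRing D] [IsDomain D] (n : ℕ) (s : ℕ → D)
    (g h : Polynomial D) (hh : Annihilates n s h)
    (hdeg : g.natDegree + h.natDegree ≤ n) :
    polyPart n s (g * h) = g * polyPart n s h := by
  ext j
  rw [polyPart_coeff, laurentCoeff_mul]
  -- compute coeff of g * polyPart n s h
  rw [show (g * polyPart n s h).coeff j = icoeff (g * polyPart n s h) (j : ℤ) from by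
    unfold icoeff; rw [if_pos (by positivity), Int.toNat_natCast]]
  rw [icoeff_mul]
  refine (Finset.sum_congr rfl fun i hi => ?_).symm
  simp only [Finset.mem_range] at hi
  rcases le_or_gt (i : ℤ) (j : ℤ) with hij | hij
  · have : ((j : ℤ) - i) = ((j - i : ℕ) : ℤ) := by omega
    rw [this]
    unfold icoeff
    rw [if_pos (by positivity), Int.toNat_natCast, polyPart_coeff]
  · have ht : (j : ℤ) - i = -((i - j : ℕ) : ℤ) := by omega
    rw [ht, laurentCoeff_neg_eq_zero n s h hh (i - j) (by omega) (by omega), mul_zero]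
    unfold icoeff
    rw [if_neg (by omega), mul_zero]
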